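/- Let m > 1, 0 < K < 1/4, and set λ₁ = (−1 − √(1−4K))/2, λ₂ = (−1 + √(1−4K))/2, λ = λ₂ − λ₁ = √(1−4K). Let u : ℝ × (0,T) → (0,∞) be a classical solution of u_t = (u^m)_{xx} + (u^m)_x + K·u^m. Define θ : (0,∞) × (0,λ²T) → (0,∞) by θ(y,τ) = y^{−λ₁/(mλ)} · u( (ln y)/λ , τ/λ² ). Then θ is a classical solution of y^{−γ} θ_τ = (θ^m)_{yy} on (0,∞) × (0,λ²T), where γ = (1/2)·[ (3m+1)/m − (m−1)/(m√(1−4K)) ]. -/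

import Mathlib

open Real Set

/-- Auxiliary: second spatial derivative of `f z = z ^ β * w (log z / l)` for `z > 0`. -/
lemma aux_spatial (β l : ℝ) (hl : l ≠ 0) (w : ℝ → ℝ)
    (hw : Differentiable ℝ w) (hw' : Differentiable ℝ (deriv w))
    (f : ℝ → ℝ) (hf : ∀ z ∈ Set.Ioi (0:ℝ), f z = z ^ β * w (Real.log z / l))
    (y : ℝ) (hy : 0 < y) :
    DifferentiableAt ℝ f y ∧ DifferentiableAt ℝ (deriv f) y ∧
    deriv (deriv f) y = y ^ (β - 2) *
      (β * (β - 1) * w (Real.log y / l) + (2*β - 1)/l * deriv w (Real.log y / l)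
        + deriv (deriv w) (Real.log y / l) / l ^ 2) := by
  set G : ℝ → ℝ := fun z => z ^ (β - 1) *
      (β * w (Real.log z / l) + deriv w (Real.log z / l) / l) with hG
  have key : ∀ z : ℝ, 0 < z → HasDerivAt f (G z) z := by
    intro z hz
    have h1 : HasDerivAt (fun t : ℝ => t ^ β) (β * z ^ (β - 1)) z :=
      Real.hasDerivAt_rpow_const (Or.inl hz.ne')
    have hlog : HasDerivAt (fun t : ℝ => Real.log t / l) (z⁻¹ / l) z :=
      (Real.hasDerivAt_log hz.ne').div_const l
    have hcomp : HasDerivAt (fun t : ℝ => w (Real.log t / l))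
        (deriv w (Real.log z / l) * (z⁻¹ / l)) z :=
      ((hw _).hasDerivAt).comp z hlog
    have hmul := h1.mul hcomp
    have heq : f =ᶠ[nhds z] fun t => t ^ β * w (Real.log t / l) := by
      filter_upwards [Ioi_mem_nhds hz] with t ht using hf t ht
    have h2 := hmul.congr_of_eventuallyEq heq
    convert h2 using 1
    show z ^ (β - 1) * (β * w (Real.log z / l) + deriv w (Real.log z / l) / l) = _
    have hz1 : z ^ (β - 1) = z ^ β / z := by
      rw [Real.rpow_sub hz, Real.rpow_one]
    rw [hz1]
    generalize z ^ β = A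
    field_simp
    all_goals rfl
  have hdf : DifferentiableAt ℝ f y := (key y hy).differentiableAt
  have hderiv_eq : deriv f =ᶠ[nhds y] G := by
    filter_upwards [Ioi_mem_nhds hy] with t ht using (key t ht).deriv
  have h1 : HasDerivAt (fun t : ℝ => t ^ (β - 1)) ((β - 1) * y ^ (β - 2)) y := by
    have h := Real.hasDerivAt_rpow_const (p := β - 1) (Or.inl hy.ne')
    have : β - 1 - 1 = β - 2 := by ring
    rwa [this] at h
  have hlog : HasDerivAt (fun t : ℝ => Real.log t / l) (y⁻¹ / l) y :=
    (Real.hasDerivAt_log hy.ne').div_const l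
  have hP : HasDerivAt (fun x => β * w x + deriv w x / l)
      (β * deriv w (Real.log y / l) + deriv (deriv w) (Real.log y / l) / l)
      (Real.log y / l) :=
    (((hw _).hasDerivAt).const_mul β).add (((hw' _).hasDerivAt).div_const l)
  have hG' : HasDerivAt G
      ((β - 1) * y ^ (β - 2) * (β * w (Real.log y / l) + deriv w (Real.log y / l) / l)
        + y ^ (β - 1) * ((β * deriv w (Real.log y / l)
            + deriv (deriv w) (Real.log y / l) / l) * (y⁻¹ / l))) y :=
    by have hc := hP.comp y hlog; exact h1.mul hc
  have hfinal := hG'.congr_of_eventuallyEq hderiv_eq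
  refine ⟨hdf, hfinal.differentiableAt, ?_⟩
  rw [hfinal.deriv]
  have hy1 : y ^ (β - 1) = y ^ (β - 2) * y := by
    rw [show β - 1 = (β - 2) + 1 by ring, Real.rpow_add hy, Real.rpow_one]
  rw [hy1]
  generalize y ^ (β - 2) = A
  field_simp
  ring

/-- for `0 < K < 1/4`, the change of variables
`θ(y,τ) = y^{-λ₁/(mλ)} u((ln y)/λ, τ/λ²)` maps classical solutions of
`u_t = (u^m)_{xx} + (u^m)_x + K u^m` on `ℝ × (0,T)` to classical solutions of
`y^{-γ} θ_τ = (θ^m)_{yy}` on `(0,∞) × (0,λ²T)`, where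
`γ = (1/2)[(3m+1)/m - (m-1)/(m√(1-4K))]`. -/
theorem stmt2
    (m K : ℝ) (hm : 1 < m) (hK0 : 0 < K) (hK : K < 1/4)
    (l₁ l₂ l : ℝ)
    (hl₁ : l₁ = (-1 - Real.sqrt (1 - 4*K)) / 2)
    (hl₂ : l₂ = (-1 + Real.sqrt (1 - 4*K)) / 2)
    (hl : l = l₂ - l₁)
    (γ : ℝ) (hγ : γ = (1/2) * ((3*m+1)/m - (m-1)/(m * Real.sqrt (1 - 4*K))))
    (T : ℝ) (hT : 0 < T)
    (u : ℝ → ℝ → ℝ)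
    (hupos : ∀ x t, t ∈ Ioo 0 T → 0 < u x t)
    (hut : ∀ x t, t ∈ Ioo 0 T → DifferentiableAt ℝ (fun s => u x s) t)
    (hux : ∀ x t, t ∈ Ioo 0 T → DifferentiableAt ℝ (fun z => u z t ^ m) x)
    (huxx : ∀ x t, t ∈ Ioo 0 T → DifferentiableAt ℝ (deriv (fun z => u z t ^ m)) x)
    (hpde : ∀ x t, t ∈ Ioo 0 T →
      deriv (fun s => u x s) t =
        deriv (deriv (fun z => u z t ^ m)) x
          + deriv (fun z => u z t ^ m) x + K * u x t ^ m)
    (θ : ℝ → ℝ → ℝ)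
    (hθ : ∀ y τ : ℝ, θ y τ = y ^ (-l₁/(m*l)) * u (Real.log y / l) (τ / l^2)) :
    ∀ y ∈ Ioi (0:ℝ), ∀ τ ∈ Ioo 0 (l^2 * T),
      0 < θ y τ ∧
      DifferentiableAt ℝ (fun s => θ y s) τ ∧
      DifferentiableAt ℝ (fun z => θ z τ ^ m) y ∧
      DifferentiableAt ℝ (deriv (fun z => θ z τ ^ m)) y ∧
      y ^ (-γ) * deriv (fun s => θ y s) τ = deriv (deriv (fun z => θ z τ ^ m)) y := by
  have hm0 : (0:ℝ) < m := by linarith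
  have hs : (0:ℝ) < 1 - 4*K := by linarith
  have hl' : l = Real.sqrt (1 - 4*K) := by rw [hl, hl₂, hl₁]; ring
  have hlpos : 0 < l := hl' ▸ Real.sqrt_pos.mpr hs
  have hl2 : l ^ 2 = 1 - 4*K := by rw [hl']; exact Real.sq_sqrt hs.le
  have hl0 : l ≠ 0 := ne_of_gt hlpos
  have hl₁v : l₁ = (-1 - l)/2 := by rw [hl₁, ← hl']
  intro y hy τ hτ
  have hy0 : (0:ℝ) < y := hy
  obtain ⟨hτ0, hτT⟩ := hτ
  have ht₀ : τ / l^2 ∈ Ioo 0 T := by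
    constructor
    · positivity
    · rw [div_lt_iff₀ (by positivity)]
      nlinarith
  have hwd : Differentiable ℝ (fun x => u x (τ/l^2) ^ m) := fun x => hux x _ ht₀
  have hw'd : Differentiable ℝ (deriv (fun x => u x (τ/l^2) ^ m)) := fun x => huxx x _ ht₀
  have hfeq : ∀ z ∈ Ioi (0:ℝ), θ z τ ^ m = z ^ (-l₁/l) * (u (Real.log z / l) (τ/l^2)) ^ m := by
    intro z hz
    have hz0 : (0:ℝ) < z := hz
    rw [hθ z τ, Real.mul_rpow (Real.rpow_nonneg hz0.le _) (hupos _ _ ht₀).le]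
    congr 1
    rw [← Real.rpow_mul hz0.le]
    congr 1
    field_simp
  have hW := aux_spatial (-l₁/l) l hl0 (fun x => u x (τ/l^2) ^ m) hwd hw'd
    (fun z => θ z τ ^ m) hfeq y hy0
  obtain ⟨hdf, hddf, hval⟩ := hW
  have htime : HasDerivAt (fun s => θ y s)
      (y ^ (-l₁/(m*l)) * (deriv (fun s => u (Real.log y / l) s) (τ/l^2) * (1/l^2))) τ := by
    have h1 : HasDerivAt (fun s : ℝ => s / l^2) (1/l^2) τ := (hasDerivAt_id τ).div_const _
    have h2 : HasDerivAt (fun s => u (Real.log y / l) s)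
        (deriv (fun s => u (Real.log y / l) s) (τ/l^2)) (τ/l^2) :=
      (hut _ _ ht₀).hasDerivAt
    have h3 := (h2.comp τ h1).const_mul (y ^ (-l₁/(m*l)))
    have heq : (fun s => θ y s) = fun s => y ^ (-l₁/(m*l)) * u (Real.log y / l) (s / l^2) :=
      funext fun s => hθ y s
    rw [heq]
    exact h3
  refine ⟨?_, htime.differentiableAt, hdf, hddf, ?_⟩
  · rw [hθ y τ]
    exact mul_pos (Real.rpow_pos_of_pos hy0 _) (hupos _ _ ht₀)
  · rw [htime.deriv, hval, hpde _ _ ht₀]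
    have hexp : -γ + (-l₁/(m*l)) = (-l₁/l) - 2 := by
      rw [hγ, hl₁v, ← hl']
      field_simp
      ring
    have e1 : (-l₁/l) * ((-l₁/l) - 1) = K / l^2 := by
      have e1' : (-l₁/l) * ((-l₁/l) - 1) = (1 - l^2)/(4*l^2) := by
        rw [hl₁v]; field_simp; ring
      rw [e1', hl2]
      field_simp
      ring
    have e2 : (2*(-l₁/l) - 1)/l = 1/l^2 := by
      rw [hl₁v]; field_simp; ring
    rw [← mul_assoc, ← Real.rpow_add hy0, hexp, e1, e2]
    ring
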